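/- Let N ≥ 1 and let b_0 < a_1 < b_1 < ⋯ < a_N < b_N < a_{N+1} be real numbers, and let A be the N×N matrix with entries A_{kj} = ∫_{a_j}^{b_j} x^{k−1} / R^{1/2}(x) dx. Then det A = ∫_{a_1}^{b_1} ⋯ ∫_{a_N}^{b_N} ∏_{1 ≤ j < k ≤ N} (x_k − x_j) · (dx_1 / R^{1/2}(x_1)) ⋯ (dx_N / R^{1/2}(x_N)), and since the integrand has constant sign on the region of integration, det A ≠ 0. -/

import Mathlib

open MeasureTheory Filter Set intervalIntegral

/-- `R(z) = ∏_{j=1}^{N+1} (z − b_{j−1})(z − a_j)`, reindexed as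
`∏_{j=0}^{N} (z − b_j)(z − a_{j+1})`. -/
noncomputable def Rpoly (N : ℕ) (a b : ℕ → ℝ) (z : ℂ) : ℂ :=
  ∏ j ∈ Finset.range (N + 1), ((z - (b j : ℂ)) * (z - (a (j + 1) : ℂ)))

noncomputable def Ppoly (N : ℕ) (a b : ℕ → ℝ) (x : ℝ) : ℝ :=
  ∏ j ∈ Finset.range (N + 1), ((x - b j) * (x - a (j + 1)))

lemma Rpoly_ofReal (N : ℕ) (a b : ℕ → ℝ) (x : ℝ) :
    Rpoly N a b (x : ℂ) = ((Ppoly N a b x : ℝ) : ℂ) := by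
  simp only [Rpoly, Ppoly]
  push_cast
  rfl

lemma sq_eq_real {z : ℂ} {c : ℝ} (hc : 0 < c) (h : z ^ 2 = (c : ℂ)) :
    z = ((z.re : ℝ) : ℂ) ∧ z.re ^ 2 = c ∧ z.re ≠ 0 := by
  have him : (z ^ 2).im = 0 := by rw [h]; simp
  have hre : (z ^ 2).re = c := by rw [h]; simp
  rw [sq] at him hre
  simp [Complex.mul_im, Complex.mul_re] at him hre
  have hz : z.im = 0 := by
    rcases mul_eq_zero.mp (by linarith : z.re * z.im = 0) with h1 | h1
    · nlinarith
    · exact h1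
  refine ⟨Complex.ext (by simp) (by simp [hz]), by nlinarith, fun h0 => by nlinarith⟩

lemma const_sign {f : ℝ → ℝ} {α β : ℝ} (hf : ContinuousOn f (Ioo α β))
    (h0 : ∀ x ∈ Ioo α β, f x ≠ 0) {x y : ℝ} (hx : x ∈ Ioo α β) (hy : y ∈ Ioo α β) :
    0 < f x * f y := by
  rcases (h0 x hx).lt_or_gt with h1 | h1 <;> rcases (h0 y hy).lt_or_gt with h2 | h2
  · exact mul_pos_of_neg_of_neg h1 h2
  all_goals try { exact mul_pos h1 h2 }
  all_goals {
    exfalso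
    have hsub : uIcc x y ⊆ Ioo α β := (Set.ordConnected_Ioo).uIcc_subset hx hy
    have := intermediate_value_uIcc (hf.mono hsub)
    have h0m : (0:ℝ) ∈ uIcc (f x) (f y) := by
      rw [Set.mem_uIcc]
      rcases le_total (f x) 0 with hc | hc
      · exact Or.inl ⟨hc, by linarith⟩
      · exact Or.inr ⟨by linarith, hc⟩
    obtain ⟨z, hz, hfz⟩ := this h0m
    exact h0 z (hsub hz) hfz }

lemma rpow_half_bound {u v L : ℝ} (hu : 0 < u) (hv : 0 < v) (hL : u + v = L) :
    (u * v) ^ (-(1/2) : ℝ) ≤ (L/2) ^ (-(1/2) : ℝ) * (u ^ (-(1/2) : ℝ) + v ^ (-(1/2) : ℝ)) := by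
  have hL2 : 0 < L / 2 := by linarith
  have hup := Real.rpow_nonneg hu.le (-(1/2) : ℝ)
  have hvp := Real.rpow_nonneg hv.le (-(1/2) : ℝ)
  have hcp := Real.rpow_nonneg hL2.le (-(1/2) : ℝ)
  rw [Real.mul_rpow hu.le hv.le]
  rcases le_total u v with h | h
  · have hv2 : L / 2 ≤ v := by linarith
    have h2 : v ^ (-(1/2) : ℝ) ≤ (L/2) ^ (-(1/2) : ℝ) :=
      Real.rpow_le_rpow_of_nonpos hL2 hv2 (by norm_num)
    nlinarith
  · have hu2 : L / 2 ≤ u := by linarith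
    have h2 : u ^ (-(1/2) : ℝ) ≤ (L/2) ^ (-(1/2) : ℝ) :=
      Real.rpow_le_rpow_of_nonpos hL2 hu2 (by norm_num)
    nlinarith

set_option maxHeartbeats 2000000 in
/-- The determinant of the matrix `A_{kj} = ∫_{a_j}^{b_j} x^{k−1}/R^{1/2}(x) dx` equals the
multiple integral of the Vandermonde product over the product of the gaps, and is nonzero. -/
theorem szego_matrix_det
    (N : ℕ) (hN : 1 ≤ N) (a b : ℕ → ℝ)
    (hband : ∀ j ≤ N, b j < a (j + 1))
    (hgap : ∀ j, 1 ≤ j → j ≤ N → a j < b j)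
    (Rhalf : ℂ → ℂ)
    (hRan : ∀ z : ℂ, ¬(z.im = 0 ∧ ∃ j ≤ N, b j ≤ z.re ∧ z.re ≤ a (j + 1)) →
      AnalyticAt ℂ Rhalf z)
    (hRsq : ∀ z : ℂ, ¬(z.im = 0 ∧ ∃ j ≤ N, b j ≤ z.re ∧ z.re ≤ a (j + 1)) →
      (Rhalf z) ^ 2 = Rpoly N a b z)
    (hRinf : Tendsto (fun z : ℂ => Rhalf z / z ^ (N + 1)) (cocompact ℂ) (nhds 1))
    (A : Matrix (Fin N) (Fin N) ℂ)
    (hA : ∀ k j : Fin N, A k j =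
      ∫ x in (a ((j : ℕ) + 1))..(b ((j : ℕ) + 1)), ((x : ℂ) ^ (k : ℕ) / Rhalf (x : ℂ))) :
    A.det = (∫ x in Set.univ.pi (fun j : Fin N => Ioc (a ((j : ℕ) + 1)) (b ((j : ℕ) + 1))),
        ((∏ j : Fin N, ∏ k ∈ Finset.univ.filter (fun k : Fin N => j < k),
            (((x k : ℝ) : ℂ) - ((x j : ℝ) : ℂ))) *
          ∏ j : Fin N, (Rhalf ((x j : ℝ) : ℂ))⁻¹)) ∧
    A.det ≠ 0 := by
  classical
  have hao : ∀ i k : ℕ, 1 ≤ i → i ≤ k → k ≤ N + 1 → a i ≤ a k := by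
    intro i k h1 hik
    induction k, hik using Nat.le_induction with
    | base => intro _; exact le_refl _
    | succ n hn ih =>
      intro hk
      have h2 : a i ≤ a n := ih (by omega)
      have h3 : a n < a (n + 1) := (hgap n (by omega) (by omega)).trans (hband n (by omega))
      exact h2.trans h3.le
  have hbo : ∀ i k : ℕ, i ≤ k → k ≤ N → b i ≤ b k := by
    intro i k hik
    induction k, hik using Nat.le_induction with
    | base => intro _; exact le_refl _
    | succ n hn ih =>
      intro hk
      have h2 : b i ≤ b n := ih (by omega)
      have h3 : b n < b (n + 1) := (hband n (by omega)).trans (hgap (n + 1) (by omega) (by omega))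
      exact h2.trans h3.le
  -- the gap inequality for Fin N indices
  have hgap' : ∀ j : Fin N, a ((j : ℕ) + 1) < b ((j : ℕ) + 1) :=
    fun j => hgap _ (by omega) (by have := j.isLt; omega)
  -- gap points are not on the cut
  have hcut : ∀ (j : Fin N) (x : ℝ), x ∈ Ioo (a ((j : ℕ) + 1)) (b ((j : ℕ) + 1)) →
      ¬((Complex.ofReal x).im = 0 ∧ ∃ i ≤ N, b i ≤ (Complex.ofReal x).re ∧
        (Complex.ofReal x).re ≤ a (i + 1)) := by
    rintro j x hx ⟨-, i, hiN, h1, h2⟩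
    simp only [Complex.ofReal_re] at h1 h2
    have hjlt := j.isLt
    rcases le_or_gt i (j : ℕ) with hij | hij
    · have : a (i + 1) ≤ a ((j : ℕ) + 1) := hao (i+1) ((j:ℕ)+1) (by omega) (by omega) (by omega)
      have := hx.1
      linarith
    · have : b ((j : ℕ) + 1) ≤ b i := hbo ((j:ℕ)+1) i (by omega) hiN
      have := hx.2
      linarith
  -- positivity of P on gaps
  have hPpos : ∀ (j : Fin N) (x : ℝ), x ∈ Ioo (a ((j : ℕ) + 1)) (b ((j : ℕ) + 1)) →
      0 < Ppoly N a b x := by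
    intro j x hx
    have hjlt := j.isLt
    apply Finset.prod_pos
    intro i hi
    simp only [Finset.mem_range] at hi
    rcases le_or_gt i (j : ℕ) with hij | hij
    · have h1 : b i ≤ b (j : ℕ) := hbo i (j : ℕ) hij (by omega)
      have h2 : b (j:ℕ) < a ((j:ℕ)+1) := hband _ (by omega)
      have h3 : a (i + 1) ≤ a ((j : ℕ) + 1) := hao _ _ (by omega) (by omega) (by omega)
      have := hx.1
      have hb : 0 < x - b i := by linarith
      have ha : 0 < x - a (i + 1) := by linarith
      exact mul_pos hb ha
    · have h1 : b ((j:ℕ)+1) ≤ b i := hbo _ _ (by omega) (by omega)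
      have h2 : a (i+1) ≥ a ((j:ℕ)+2) := hao _ _ (by omega) (by omega) (by omega)
      have h3 : b ((j:ℕ)+1) < a ((j:ℕ)+2) := hband _ (by omega)
      have := hx.2
      exact mul_pos_of_neg_of_neg (by linarith) (by linarith)
  -- Rhalf is real and nonvanishing on the gaps
  have hreal : ∀ (j : Fin N) (x : ℝ), x ∈ Ioo (a ((j : ℕ) + 1)) (b ((j : ℕ) + 1)) →
      Rhalf (x : ℂ) = (((Rhalf (x : ℂ)).re : ℝ) : ℂ) ∧
      (Rhalf (x : ℂ)).re ^ 2 = Ppoly N a b x ∧ (Rhalf (x : ℂ)).re ≠ 0 := by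
    intro j x hx
    have h1 : (Rhalf (x : ℂ)) ^ 2 = ((Ppoly N a b x : ℝ) : ℂ) := by
      rw [hRsq _ (hcut j x hx)]; exact Rpoly_ofReal N a b x
    exact sq_eq_real (hPpos j x hx) h1
  -- continuity of Rhalf along the gaps
  have hcontC : ∀ (j : Fin N) (x : ℝ), x ∈ Ioo (a ((j : ℕ) + 1)) (b ((j : ℕ) + 1)) →
      ContinuousAt (fun y : ℝ => Rhalf (y : ℂ)) x := by
    intro j x hx
    exact ((hRan _ (hcut j x hx)).continuousAt).comp Complex.continuous_ofReal.continuousAt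
  have hcontRe : ∀ j : Fin N,
      ContinuousOn (fun y : ℝ => (Rhalf (y : ℂ)).re) (Ioo (a ((j:ℕ) + 1)) (b ((j:ℕ) + 1))) :=
    fun j x hx => (Complex.continuous_re.continuousAt.comp (hcontC j x hx)).continuousWithinAt
  -- midpoints
  have hmid : ∀ j : Fin N,
      (a ((j:ℕ)+1) + b ((j:ℕ)+1)) / 2 ∈ Ioo (a ((j:ℕ) + 1)) (b ((j:ℕ) + 1)) := by
    intro j
    have := hgap' j
    constructor <;> [linarith; linarith]
  -- the sign of Rhalf on gap j
  set ε : Fin N → ℝ := fun j =>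
    if 0 < (Rhalf ((((a ((j:ℕ)+1) + b ((j:ℕ)+1)) / 2 : ℝ)) : ℂ)).re then 1 else -1 with hεdef
  have hε : ∀ (j : Fin N) (x : ℝ), x ∈ Ioo (a ((j:ℕ) + 1)) (b ((j:ℕ) + 1)) →
      0 < ε j * (Rhalf (x : ℂ)).re := by
    intro j x hx
    have hcs := const_sign (hcontRe j) (fun y hy => (hreal j y hy).2.2) (hmid j) hx
    have hne := (hreal j _ (hmid j)).2.2
    rw [hεdef]
    simp only
    split_ifs with h
    · nlinarith
    · have : (Rhalf ((((a ((j:ℕ)+1) + b ((j:ℕ)+1)) / 2 : ℝ)) : ℂ)).re < 0 :=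
        lt_of_le_of_ne (not_lt.mp h) hne
      nlinarith
  have hε1 : ∀ j : Fin N, ε j = 1 ∨ ε j = -1 := by
    intro j; rw [hεdef]; simp only; split_ifs <;> simp
  -- lower bound for P on the closed gap
  have hPlow : ∀ j : Fin N, ∃ m : ℝ, 0 < m ∧ ∀ x ∈ Ioo (a ((j:ℕ)+1)) (b ((j:ℕ)+1)),
      m * ((x - a ((j:ℕ)+1)) * (b ((j:ℕ)+1) - x)) ≤ Ppoly N a b x := by
    intro j
    have hjlt := j.isLt
    set S : Finset ℕ := ((Finset.range (N+1)).erase (j:ℕ)).erase ((j:ℕ)+1) with hS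
    set Q : ℝ → ℝ := fun x =>
      (x - b (j:ℕ)) * (a ((j:ℕ)+2) - x) * ∏ i ∈ S, ((x - b i) * (x - a (i+1))) with hQdef
    have hQc : Continuous Q := by
      apply Continuous.mul
      · fun_prop
      · exact continuous_finset_prod _ (fun i _ => by fun_prop)
    have hQP : ∀ x : ℝ, Ppoly N a b x = (x - a ((j:ℕ)+1)) * (b ((j:ℕ)+1) - x) * Q x := by
      intro x
      have h1 : (j:ℕ) ∈ Finset.range (N+1) := by simp only [Finset.mem_range]; omega
      have h2 : (j:ℕ)+1 ∈ (Finset.range (N+1)).erase (j:ℕ) := by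
        simp only [Finset.mem_erase, Finset.mem_range]; omega
      rw [Ppoly, ← Finset.mul_prod_erase _ _ h1, ← Finset.mul_prod_erase _ _ h2, ← hS, hQdef]
      ring
    have hQpos : ∀ x ∈ Icc (a ((j:ℕ)+1)) (b ((j:ℕ)+1)), 0 < Q x := by
      intro x hx
      have hx1 := hx.1
      have hx2 := hx.2
      have h1 : b (j:ℕ) < a ((j:ℕ)+1) := hband _ (by omega)
      have h2 : b ((j:ℕ)+1) < a ((j:ℕ)+2) := hband _ (by omega)
      apply mul_pos (mul_pos (by linarith) (by linarith))
      apply Finset.prod_pos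
      intro i hi
      rw [hS] at hi
      simp only [Finset.mem_erase, Finset.mem_range] at hi
      obtain ⟨hi1, hi2, hi3⟩ := hi
      rcases lt_or_gt_of_ne hi2 with hij | hij
      · -- i < j
        have hb1 : b i ≤ b (j:ℕ) := hbo _ _ (by omega) (by omega)
        have ha1 : a (i+1) ≤ a (j:ℕ) := hao (i+1) (j:ℕ) (by omega) (by omega) (by omega)
        have ha2 : a (j:ℕ) < b (j:ℕ) := hgap _ (by omega) (by omega)
        exact mul_pos (by linarith) (by linarith)
      · -- j + 1 < i
        have ha1 : a ((j:ℕ)+2) ≤ a (i+1) := hao _ _ (by omega) (by omega) (by omega)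
        have ha2 : a ((j:ℕ)+2) ≤ a i := hao _ _ (by omega) (by omega) (by omega)
        have ha3 : a i < b i := hgap i (by omega) (by omega)
        exact mul_pos_of_neg_of_neg (by linarith) (by linarith)
    obtain ⟨x₀, hx₀, hmin⟩ := isCompact_Icc.exists_isMinOn
      (nonempty_Icc.mpr (hgap' j).le) hQc.continuousOn
    refine ⟨Q x₀, hQpos x₀ hx₀, ?_⟩
    intro x hx
    rw [hQP x]
    have h1 : Q x₀ ≤ Q x := hmin (Ioo_subset_Icc_self hx)
    have h2 : 0 ≤ (x - a ((j:ℕ)+1)) * (b ((j:ℕ)+1) - x) := by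
      have := hx.1; have := hx.2
      exact mul_nonneg (by linarith) (by linarith)
    nlinarith
  -- norm of 1/Rhalf on the gaps
  have hnorm : ∀ (j : Fin N), ∀ x ∈ Ioo (a ((j:ℕ)+1)) (b ((j:ℕ)+1)),
      ‖(Rhalf (x:ℂ))⁻¹‖ = (Ppoly N a b x) ^ (-(1/2) : ℝ) := by
    intro j x hx
    obtain ⟨h1, h2, h3⟩ := hreal j x hx
    have hP := hPpos j x hx
    rw [norm_inv, h1, Complex.norm_real, Real.norm_eq_abs, ← Real.sqrt_sq_eq_abs, h2,
      Real.sqrt_eq_rpow, Real.rpow_neg hP.le]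
  -- integrability of 1/Rhalf over each gap
  have hIntInv : ∀ j : Fin N,
      IntegrableOn (fun x : ℝ => (Rhalf (x:ℂ))⁻¹) (Ioc (a ((j:ℕ)+1)) (b ((j:ℕ)+1))) volume := by
    intro j
    obtain ⟨m, hm, hmP⟩ := hPlow j
    have hab := hgap' j
    have hcOn : ContinuousOn (fun x : ℝ => (Rhalf (x:ℂ))⁻¹)
        (Ioo (a ((j:ℕ)+1)) (b ((j:ℕ)+1))) := by
      intro x hx
      have h2 : Rhalf (x:ℂ) ≠ 0 := by
        obtain ⟨h1', h2', h3'⟩ := hreal j x hx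
        rw [h1']
        exact Complex.ofReal_ne_zero.mpr h3'
      exact ((hcontC j x hx).inv₀ h2).continuousWithinAt
    have hC1p : 0 ≤ m ^ (-(1/2):ℝ) * ((b ((j:ℕ)+1) - a ((j:ℕ)+1))/2) ^ (-(1/2):ℝ) :=
      mul_nonneg (Real.rpow_nonneg hm.le _) (Real.rpow_nonneg (by linarith) _)
    have hBint : IntegrableOn (fun x : ℝ =>
        m ^ (-(1/2):ℝ) * ((b ((j:ℕ)+1) - a ((j:ℕ)+1))/2) ^ (-(1/2):ℝ) *
          ((x - a ((j:ℕ)+1)) ^ (-(1/2):ℝ) + (b ((j:ℕ)+1) - x) ^ (-(1/2):ℝ)))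
        (Ioc (a ((j:ℕ)+1)) (b ((j:ℕ)+1))) volume := by
      have h1 : IntervalIntegrable (fun x : ℝ => (x - a ((j:ℕ)+1)) ^ (-(1/2):ℝ)) volume
          (a ((j:ℕ)+1)) (b ((j:ℕ)+1)) := by
        have := (intervalIntegral.intervalIntegrable_rpow' (a := 0)
          (b := b ((j:ℕ)+1) - a ((j:ℕ)+1)) (by norm_num : (-1:ℝ) < -(1/2))).comp_sub_right
          (a ((j:ℕ)+1))
        simpa using this
      have h2 : IntervalIntegrable (fun x : ℝ => (b ((j:ℕ)+1) - x) ^ (-(1/2):ℝ)) volume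
          (a ((j:ℕ)+1)) (b ((j:ℕ)+1)) := by
        have := (intervalIntegral.intervalIntegrable_rpow' (a := 0)
          (b := b ((j:ℕ)+1) - a ((j:ℕ)+1)) (by norm_num : (-1:ℝ) < -(1/2))).comp_sub_left
          (b ((j:ℕ)+1))
        simpa using this.symm
      have h3 := (h1.add h2).const_mul
        (m ^ (-(1/2):ℝ) * ((b ((j:ℕ)+1) - a ((j:ℕ)+1))/2) ^ (-(1/2):ℝ))
      rw [intervalIntegrable_iff_integrableOn_Ioc_of_le hab.le] at h3
      exact h3
    have hmeas : AEStronglyMeasurable (fun x : ℝ => (Rhalf (x:ℂ))⁻¹)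
        (volume.restrict (Ioo (a ((j:ℕ)+1)) (b ((j:ℕ)+1)))) :=
      hcOn.aestronglyMeasurable measurableSet_Ioo
    have hboundAE : ∀ᵐ (x : ℝ) ∂(volume.restrict (Ioo (a ((j:ℕ)+1)) (b ((j:ℕ)+1)))),
        ‖(Rhalf (x:ℂ))⁻¹‖ ≤ m ^ (-(1/2):ℝ) * ((b ((j:ℕ)+1) - a ((j:ℕ)+1))/2) ^ (-(1/2):ℝ) *
          ((x - a ((j:ℕ)+1)) ^ (-(1/2):ℝ) + (b ((j:ℕ)+1) - x) ^ (-(1/2):ℝ)) := by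
      rw [ae_restrict_iff' measurableSet_Ioo]
      refine ae_of_all _ (fun x hx => ?_)
      rw [hnorm j x hx]
      have hu : 0 < x - a ((j:ℕ)+1) := by have := hx.1; linarith
      have hv : 0 < b ((j:ℕ)+1) - x := by have := hx.2; linarith
      have h0 : 0 < (x - a ((j:ℕ)+1)) * (b ((j:ℕ)+1) - x) := mul_pos hu hv
      have h1 := hmP x hx
      have h2 : (Ppoly N a b x) ^ (-(1/2):ℝ) ≤
          (m * ((x - a ((j:ℕ)+1)) * (b ((j:ℕ)+1) - x))) ^ (-(1/2):ℝ) :=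
        Real.rpow_le_rpow_of_nonpos (by positivity) h1 (by norm_num)
      have h3 : (m * ((x - a ((j:ℕ)+1)) * (b ((j:ℕ)+1) - x))) ^ (-(1/2):ℝ) =
          m ^ (-(1/2):ℝ) * ((x - a ((j:ℕ)+1)) * (b ((j:ℕ)+1) - x)) ^ (-(1/2):ℝ) :=
        Real.mul_rpow hm.le h0.le
      have h4 := rpow_half_bound hu hv (by ring : (x - a ((j:ℕ)+1)) + (b ((j:ℕ)+1) - x) =
        b ((j:ℕ)+1) - a ((j:ℕ)+1))
      have h5 := mul_le_mul_of_nonneg_left h4 (Real.rpow_nonneg hm.le (-(1/2) : ℝ))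
      calc (Ppoly N a b x) ^ (-(1/2):ℝ)
          ≤ (m * ((x - a ((j:ℕ)+1)) * (b ((j:ℕ)+1) - x))) ^ (-(1/2):ℝ) := h2
        _ = m ^ (-(1/2):ℝ) * ((x - a ((j:ℕ)+1)) * (b ((j:ℕ)+1) - x)) ^ (-(1/2):ℝ) := h3
        _ ≤ m ^ (-(1/2):ℝ) * (((b ((j:ℕ)+1) - a ((j:ℕ)+1))/2) ^ (-(1/2):ℝ) *
            ((x - a ((j:ℕ)+1)) ^ (-(1/2):ℝ) + (b ((j:ℕ)+1) - x) ^ (-(1/2):ℝ))) := h5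
        _ = _ := by ring
    have hIoo : IntegrableOn (fun x : ℝ => (Rhalf (x:ℂ))⁻¹)
        (Ioo (a ((j:ℕ)+1)) (b ((j:ℕ)+1))) volume :=
      Integrable.mono' (hBint.mono_set Ioo_subset_Ioc_self) hmeas hboundAE
    exact (integrableOn_Ioc_iff_integrableOn_Ioo).mpr hIoo
  -- integrability of the matrix-entry integrands
  have hIntk : ∀ (k : ℕ) (j : Fin N),
      IntegrableOn (fun x : ℝ => (x:ℂ)^k / Rhalf (x:ℂ))
        (Ioc (a ((j:ℕ)+1)) (b ((j:ℕ)+1))) volume := by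
    intro k j
    simp only [div_eq_mul_inv]
    refine Integrable.mono'
      ((hIntInv j).norm.const_mul ((max |a ((j:ℕ)+1)| |b ((j:ℕ)+1)|)^k)) ?_ ?_
    · exact ((Complex.continuous_ofReal.pow k).aestronglyMeasurable.restrict).mul
        (hIntInv j).aestronglyMeasurable
    · rw [ae_restrict_iff' measurableSet_Ioc]
      refine ae_of_all _ (fun x hx => ?_)
      rw [norm_mul, norm_pow, Complex.norm_real, Real.norm_eq_abs]
      have hxM : |x| ≤ max |a ((j:ℕ)+1)| |b ((j:ℕ)+1)| := by
        have h1 := le_max_left |a ((j:ℕ)+1)| |b ((j:ℕ)+1)|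
        have h2 := le_max_right |a ((j:ℕ)+1)| |b ((j:ℕ)+1)|
        have h3 := neg_abs_le (a ((j:ℕ)+1))
        have h4 := le_abs_self (b ((j:ℕ)+1))
        have h5 := hx.1
        have h6 := hx.2
        rw [abs_le]
        constructor <;> linarith
      exact mul_le_mul_of_nonneg_right (pow_le_pow_left₀ (abs_nonneg x) hxM k) (norm_nonneg _)
  -- the column integrands, as globally defined functions
  set f : Fin N → Fin N → ℝ → ℂ := fun k j x =>
    (Ioc (a ((j:ℕ)+1)) (b ((j:ℕ)+1))).indicator
      (fun y : ℝ => (y:ℂ)^(k:ℕ) / Rhalf (y:ℂ)) x with hfdef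
  have hfint : ∀ k j : Fin N, Integrable (f k j) volume :=
    fun k j => (integrable_indicator_iff measurableSet_Ioc).mpr (hIntk (k:ℕ) j)
  have hAf : ∀ k j : Fin N, A k j = ∫ x : ℝ, f k j x := by
    intro k j
    rw [hA k j, intervalIntegral.integral_of_le (hgap' j).le]
    exact (MeasureTheory.integral_indicator measurableSet_Ioc).symm
  -- the Vandermonde identity
  have hv : ∀ x : Fin N → ℝ,
      (∑ σ : Equiv.Perm (Fin N), ((Equiv.Perm.sign σ : ℤ) : ℂ) *
        ∏ j : Fin N, ((x j : ℂ)) ^ ((σ j : ℕ))) =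
      ∏ j : Fin N, ∏ k ∈ Finset.univ.filter (fun k : Fin N => j < k),
        (((x k : ℝ) : ℂ) - ((x j : ℝ) : ℂ)) := by
    intro x
    have h1 : (∑ σ : Equiv.Perm (Fin N), ((Equiv.Perm.sign σ : ℤ) : ℂ) *
        ∏ j : Fin N, ((x j : ℂ)) ^ ((σ j : ℕ))) =
        (Matrix.transpose (Matrix.vandermonde (fun j : Fin N => (x j : ℂ)))).det := by
      rw [Matrix.det_apply']
      refine Finset.sum_congr rfl fun σ _ => ?_
      congr 1
    rw [h1, Matrix.det_transpose, Matrix.det_vandermonde]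
    refine Finset.prod_congr rfl fun j _ => Finset.prod_congr ?_ fun _ _ => rfl
    ext k
    simp [Finset.mem_Ioi, Finset.mem_filter]
  -- pointwise identity between the permanent-sum and the indicator integrand
  have key : ∀ x : Fin N → ℝ,
      (∑ σ : Equiv.Perm (Fin N), ((Equiv.Perm.sign σ : ℤ) : ℂ) *
          ∏ j : Fin N, f (σ j) j (x j)) =
      (Set.univ.pi (fun j : Fin N => Ioc (a ((j:ℕ)+1)) (b ((j:ℕ)+1)))).indicator
        (fun x : Fin N → ℝ =>
          (∏ j : Fin N, ∏ k ∈ Finset.univ.filter (fun k : Fin N => j < k),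
            (((x k : ℝ) : ℂ) - ((x j : ℝ) : ℂ))) *
          ∏ j : Fin N, (Rhalf ((x j : ℝ) : ℂ))⁻¹) x := by
    intro x
    by_cases hx : x ∈ Set.univ.pi (fun j : Fin N => Ioc (a ((j:ℕ)+1)) (b ((j:ℕ)+1)))
    · rw [Set.indicator_of_mem hx]
      have hmem : ∀ j : Fin N, x j ∈ Ioc (a ((j:ℕ)+1)) (b ((j:ℕ)+1)) :=
        fun j => hx j (Set.mem_univ j)
      have hf : ∀ k j : Fin N, f k j (x j) = ((x j : ℂ)) ^ (k:ℕ) * (Rhalf (x j : ℂ))⁻¹ := by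
        intro k j
        rw [hfdef]
        simp only
        rw [Set.indicator_of_mem (hmem j), div_eq_mul_inv]
      calc (∑ σ : Equiv.Perm (Fin N), ((Equiv.Perm.sign σ : ℤ) : ℂ) *
              ∏ j : Fin N, f (σ j) j (x j))
          = ∑ σ : Equiv.Perm (Fin N), ((Equiv.Perm.sign σ : ℤ) : ℂ) *
              ((∏ j : Fin N, ((x j:ℂ)) ^ ((σ j : ℕ))) * ∏ j : Fin N, (Rhalf (x j : ℂ))⁻¹) := by
            refine Finset.sum_congr rfl fun σ _ => ?_
            rw [← Finset.prod_mul_distrib]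
            congr 1
            exact Finset.prod_congr rfl fun j _ => hf (σ j) j
        _ = (∑ σ : Equiv.Perm (Fin N), ((Equiv.Perm.sign σ : ℤ) : ℂ) *
              ∏ j : Fin N, ((x j:ℂ)) ^ ((σ j : ℕ))) * ∏ j : Fin N, (Rhalf (x j : ℂ))⁻¹ := by
            rw [Finset.sum_mul]
            exact Finset.sum_congr rfl fun σ _ => (mul_assoc _ _ _).symm
        _ = _ := by rw [hv x]
    · rw [Set.indicator_of_notMem hx]
      refine Finset.sum_eq_zero fun σ _ => ?_
      rw [Set.mem_pi] at hx
      push_neg at hx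
      obtain ⟨j0, -, hj0⟩ := hx
      have hzero : f (σ j0) j0 (x j0) = 0 := by
        rw [hfdef]
        simp only
        exact Set.indicator_of_notMem hj0 _
      rw [Finset.prod_eq_zero (Finset.mem_univ j0) hzero, mul_zero]
  -- determinant as an integral over the pi-set
  have hdet : A.det = ∫ x in Set.univ.pi (fun j : Fin N => Ioc (a ((j:ℕ)+1)) (b ((j:ℕ)+1))),
      ((∏ j : Fin N, ∏ k ∈ Finset.univ.filter (fun k : Fin N => j < k),
          (((x k : ℝ) : ℂ) - ((x j : ℝ) : ℂ))) *
        ∏ j : Fin N, (Rhalf ((x j : ℝ) : ℂ))⁻¹) := by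
    rw [Matrix.det_apply']
    calc ∑ σ : Equiv.Perm (Fin N), ((Equiv.Perm.sign σ : ℤ) : ℂ) * ∏ j : Fin N, A (σ j) j
        = ∑ σ : Equiv.Perm (Fin N), ((Equiv.Perm.sign σ : ℤ) : ℂ) *
            ∫ x : Fin N → ℝ, ∏ j : Fin N, f (σ j) j (x j) := by
          refine Finset.sum_congr rfl fun σ _ => ?_
          congr 1
          calc ∏ j : Fin N, A (σ j) j = ∏ j : Fin N, ∫ x : ℝ, f (σ j) j x :=
                Finset.prod_congr rfl fun j _ => hAf (σ j) j
            _ = ∫ x : Fin N → ℝ, ∏ j : Fin N, f (σ j) j (x j) :=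
                (MeasureTheory.integral_fintype_prod_eq_prod
                  (fun j => f (σ j) j)).symm
      _ = ∑ σ : Equiv.Perm (Fin N), ∫ x : Fin N → ℝ,
            ((Equiv.Perm.sign σ : ℤ) : ℂ) * ∏ j : Fin N, f (σ j) j (x j) := by
          refine Finset.sum_congr rfl fun σ _ => (MeasureTheory.integral_const_mul _ _).symm
      _ = ∫ x : Fin N → ℝ, ∑ σ : Equiv.Perm (Fin N),
            ((Equiv.Perm.sign σ : ℤ) : ℂ) * ∏ j : Fin N, f (σ j) j (x j) :=
          (integral_finset_sum _ (fun σ _ =>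
            (Integrable.fintype_prod (fun j => hfint (σ j) j)).const_mul _)).symm
      _ = ∫ x : Fin N → ℝ, (Set.univ.pi (fun j : Fin N =>
            Ioc (a ((j:ℕ)+1)) (b ((j:ℕ)+1)))).indicator
            (fun x : Fin N → ℝ =>
              (∏ j : Fin N, ∏ k ∈ Finset.univ.filter (fun k : Fin N => j < k),
                (((x k : ℝ) : ℂ) - ((x j : ℝ) : ℂ))) *
              ∏ j : Fin N, (Rhalf ((x j : ℝ) : ℂ))⁻¹) x :=
          integral_congr_ae (Eventually.of_forall key)
      _ = _ := MeasureTheory.integral_indicator (MeasurableSet.univ_pi (fun j => measurableSet_Ioc))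
  -- integrability of the full integrand on the pi-set
  have hgInt : IntegrableOn (fun x : Fin N → ℝ =>
      (∏ j : Fin N, ∏ k ∈ Finset.univ.filter (fun k : Fin N => j < k),
        (((x k : ℝ) : ℂ) - ((x j : ℝ) : ℂ))) *
      ∏ j : Fin N, (Rhalf ((x j : ℝ) : ℂ))⁻¹)
      (Set.univ.pi (fun j : Fin N => Ioc (a ((j:ℕ)+1)) (b ((j:ℕ)+1)))) volume := by
    have h1 : Integrable (fun x : Fin N → ℝ => ∑ σ : Equiv.Perm (Fin N),
        ((Equiv.Perm.sign σ : ℤ) : ℂ) * ∏ j : Fin N, f (σ j) j (x j)) volume :=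
      integrable_finset_sum _ (fun σ _ =>
        (Integrable.fintype_prod (fun j => hfint (σ j) j)).const_mul _)
    have h2 := h1.congr (Eventually.of_forall key)
    exact (integrable_indicator_iff (MeasurableSet.univ_pi fun j => measurableSet_Ioc)).mp h2
  -- a.e. on the pi-set, every coordinate lies in the open gap
  have haes : ∀ᵐ x : Fin N → ℝ ∂(volume.restrict (Set.univ.pi
      (fun j : Fin N => Ioc (a ((j:ℕ)+1)) (b ((j:ℕ)+1))))),
      ∀ j : Fin N, x j ∈ Ioo (a ((j:ℕ)+1)) (b ((j:ℕ)+1)) := by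
    have h1 : ∀ᵐ x : Fin N → ℝ ∂(volume.restrict (Set.univ.pi
        (fun j : Fin N => Ioc (a ((j:ℕ)+1)) (b ((j:ℕ)+1))))),
        x ∈ Set.univ.pi (fun j : Fin N => Ioc (a ((j:ℕ)+1)) (b ((j:ℕ)+1))) :=
      ae_restrict_mem (MeasurableSet.univ_pi fun j => measurableSet_Ioc)
    have h2 : ∀ j : Fin N, ∀ᵐ x : Fin N → ℝ ∂(volume.restrict (Set.univ.pi
        (fun j : Fin N => Ioc (a ((j:ℕ)+1)) (b ((j:ℕ)+1))))), x j ≠ b ((j:ℕ)+1) := by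
      intro j
      have h3 : volume ((fun x : Fin N → ℝ => x j) ⁻¹' {b ((j:ℕ)+1)}) = 0 := by
        rw [MeasureTheory.volume_pi]
        exact Measure.pi_hyperplane _ j _
      have h4 : (volume.restrict (Set.univ.pi
          (fun j : Fin N => Ioc (a ((j:ℕ)+1)) (b ((j:ℕ)+1)))))
          ((fun x : Fin N → ℝ => x j) ⁻¹' {b ((j:ℕ)+1)}) = 0 := by
        rw [Measure.restrict_apply
          ((measurableSet_singleton _).preimage (measurable_pi_apply j))]
        exact measure_mono_null Set.inter_subset_left h3
      rw [ae_iff]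
      simp only [ne_eq, not_not]
      exact h4
    rw [MeasureTheory.ae_all_iff]
    intro j
    filter_upwards [h1, h2 j] with x hx1 hx2
    have hm := hx1 j (Set.mem_univ j)
    exact ⟨hm.1, lt_of_le_of_ne hm.2 hx2⟩
  -- the real form of the integrand
  set H : (Fin N → ℝ) → ℝ := fun x =>
    (∏ j : Fin N, ∏ k ∈ Finset.univ.filter (fun k : Fin N => j < k), (x k - x j)) *
      ∏ j : Fin N, ((Rhalf (x j : ℂ)).re)⁻¹ with hH
  have hae2 : (fun x : Fin N → ℝ =>
      (∏ j : Fin N, ∏ k ∈ Finset.univ.filter (fun k : Fin N => j < k),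
        (((x k : ℝ) : ℂ) - ((x j : ℝ) : ℂ))) *
      ∏ j : Fin N, (Rhalf ((x j : ℝ) : ℂ))⁻¹) =ᵐ[volume.restrict (Set.univ.pi
      (fun j : Fin N => Ioc (a ((j:ℕ)+1)) (b ((j:ℕ)+1))))]
      (fun x : Fin N → ℝ => ((H x : ℝ) : ℂ)) := by
    filter_upwards [haes] with x hx
    have h1 : ∀ j : Fin N, Rhalf (x j : ℂ) = ((Rhalf (x j : ℂ)).re : ℂ) :=
      fun j => (hreal j _ (hx j)).1
    calc (∏ j : Fin N, ∏ k ∈ Finset.univ.filter (fun k : Fin N => j < k),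
          (((x k : ℝ) : ℂ) - ((x j : ℝ) : ℂ))) *
        ∏ j : Fin N, (Rhalf ((x j : ℝ) : ℂ))⁻¹
        = (∏ j : Fin N, ∏ k ∈ Finset.univ.filter (fun k : Fin N => j < k),
          (((x k : ℝ) : ℂ) - ((x j : ℝ) : ℂ))) *
        ∏ j : Fin N, ((((Rhalf (x j : ℂ)).re : ℝ) : ℂ))⁻¹ := by
          refine congrArg _ (Finset.prod_congr rfl fun j _ => ?_)
          rw [← h1 j]
      _ = ((H x : ℝ) : ℂ) := by
          rw [hH]
          push_cast
          ring
  have hHint : Integrable H (volume.restrict (Set.univ.pi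
      (fun j : Fin N => Ioc (a ((j:ℕ)+1)) (b ((j:ℕ)+1))))) := by
    have h5 := (hgInt.congr hae2).re
    refine h5.congr (Eventually.of_forall fun x => ?_)
    simp
  -- positivity of the sign-corrected real integrand
  have hEH : ∀ x : Fin N → ℝ, (∀ j : Fin N, x j ∈ Ioo (a ((j:ℕ)+1)) (b ((j:ℕ)+1))) →
      0 < (∏ j : Fin N, ε j) * H x := by
    intro x hx
    have hV : 0 < ∏ j : Fin N, ∏ k ∈ Finset.univ.filter (fun k : Fin N => j < k),
        (x k - x j) := by
      refine Finset.prod_pos fun j _ => Finset.prod_pos fun k hk => ?_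
      have hjk : j < k := (Finset.mem_filter.mp hk).2
      have hjk' : (j:ℕ) < (k:ℕ) := hjk
      have hkN := k.isLt
      have h1 : x j < b ((j:ℕ)+1) := (hx j).2
      have h2 : b ((j:ℕ)+1) ≤ b (k:ℕ) := hbo _ _ (by omega) (by omega)
      have h3 : b (k:ℕ) < a ((k:ℕ)+1) := hband _ (by omega)
      have h4 : a ((k:ℕ)+1) < x k := (hx k).1
      linarith
    have hE : 0 < ∏ j : Fin N, (ε j * ((Rhalf (x j : ℂ)).re)⁻¹) := by
      refine Finset.prod_pos fun j _ => ?_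
      have h1 := hε j (x j) (hx j)
      rcases hε1 j with h2 | h2 <;> rw [h2] at h1 ⊢
      · rw [one_mul] at h1 ⊢
        exact inv_pos.mpr h1
      · have h3 : (Rhalf (x j : ℂ)).re < 0 := by nlinarith
        have h4 := inv_lt_zero.mpr h3
        nlinarith
    rw [Finset.prod_mul_distrib] at hE
    rw [hH]
    simp only
    nlinarith
  -- the set-integral of the sign-corrected integrand is positive
  have hpos : 0 < ∫ x in Set.univ.pi (fun j : Fin N => Ioc (a ((j:ℕ)+1)) (b ((j:ℕ)+1))),
      ((∏ j : Fin N, ε j) * H x) := by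
    rw [MeasureTheory.setIntegral_pos_iff_support_of_nonneg_ae]
    · refine lt_of_lt_of_le ?_ (measure_mono (?_ :
        Set.univ.pi (fun j : Fin N => Ioo (a ((j:ℕ)+1)) (b ((j:ℕ)+1))) ⊆ _))
      · rw [volume_pi_pi]
        refine CanonicallyOrderedAdd.prod_pos.mpr fun j _ => ?_
        rw [Real.volume_Ioo]
        exact ENNReal.ofReal_pos.mpr (by have := hgap' j; linarith)
      · intro x hx
        have hx' : ∀ j : Fin N, x j ∈ Ioo (a ((j:ℕ)+1)) (b ((j:ℕ)+1)) :=
          fun j => hx j (Set.mem_univ j)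
        constructor
        · exact (hEH x hx').ne'
        · exact fun j _ => Ioo_subset_Ioc_self (hx' j)
    · filter_upwards [haes] with x hx
      exact (hEH x hx).le
    · exact hHint.const_mul _
  -- conclusion
  have hne : A.det ≠ 0 := by
    have hdetH : A.det = ((∫ x in Set.univ.pi
        (fun j : Fin N => Ioc (a ((j:ℕ)+1)) (b ((j:ℕ)+1))), H x : ℝ) : ℂ) := by
      rw [hdet, integral_congr_ae hae2]
      exact _root_.integral_ofReal
    rw [hdetH]
    simp only [ne_eq, Complex.ofReal_eq_zero]
    intro h0
    rw [MeasureTheory.integral_const_mul, h0, mul_zero] at hpos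
    exact lt_irrefl 0 hpos
  exact ⟨hdet, hne⟩
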